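/- (Coarse Ricci lower bound property, weighted Euclidean case.) Let ρ : ℝⁿ → ℝ be smooth (C³) and K ∈ ℝ. Then the Bakry–Emery Ricci lower bound Hess ρ_x(v,v) ≥ K‖v‖² for all x ∈ ℝⁿ and all v ∈ ℝⁿ holds if and only if the coarse Ricci curvature of the weighted Laplacian satisfies Ric_{Δ_ρ}(x,y) ≥ K·d²(x,y) for all x, y ∈ ℝⁿ. -/

import Mathlib

open scoped RealInnerProductSpace

/-- The Euclidean Laplacian: the trace of the Hessian, i.e. the sum of pure second
partial derivatives. -/
noncomputable def eLap {n : ℕ} (f : EuclideanSpace ℝ (Fin n) → ℝ)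
    (x : EuclideanSpace ℝ (Fin n)) : ℝ :=
  ∑ i, fderiv ℝ (fun y => fderiv ℝ f y (EuclideanSpace.single i 1)) x (EuclideanSpace.single i 1)

/-- The carré du champ of an operator `L`: `Γ(L,u,v) = (1/2)(L(uv) − (Lu)v − u(Lv))`. -/
noncomputable def carre {n : ℕ}
    (L : (EuclideanSpace ℝ (Fin n) → ℝ) → EuclideanSpace ℝ (Fin n) → ℝ)
    (u v : EuclideanSpace ℝ (Fin n) → ℝ) (z : EuclideanSpace ℝ (Fin n)) : ℝ :=
  (1/2) * (L (fun w => u w * v w) z - L u z * v z - u z * L v z)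

/-- The iterated carré du champ (diagonal):
`Γ₂(L,f,f) = (1/2)(L(Γ(L,f,f)) − 2Γ(L,Lf,f))`. -/
noncomputable def gamma2 {n : ℕ}
    (L : (EuclideanSpace ℝ (Fin n) → ℝ) → EuclideanSpace ℝ (Fin n) → ℝ)
    (f : EuclideanSpace ℝ (Fin n) → ℝ) (z : EuclideanSpace ℝ (Fin n)) : ℝ :=
  (1/2) * (L (carre L f f) z - 2 * carre L (L f) f z)

/-- The weighted Laplacian `Δ_ρ f = Δf − ⟨∇ρ, ∇f⟩`. -/
noncomputable def wLap {n : ℕ} (ρ f : EuclideanSpace ℝ (Fin n) → ℝ)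
    (z : EuclideanSpace ℝ (Fin n)) : ℝ :=
  eLap f z - ⟪gradient ρ z, gradient f z⟫

/-- The Hessian matrix of second partial derivatives. -/
noncomputable def hess {n : ℕ} (f : EuclideanSpace ℝ (Fin n) → ℝ)
    (z : EuclideanSpace ℝ (Fin n)) (i j : Fin n) : ℝ :=
  fderiv ℝ (fun y => fderiv ℝ f y (EuclideanSpace.single j 1)) z (EuclideanSpace.single i 1)

/-- The test function `f_{x,y}(z) = (1/2)(d²(x,y) − d²(y,z) + d²(z,x))`. -/
noncomputable def testFn {n : ℕ} (x y z : EuclideanSpace ℝ (Fin n)) : ℝ :=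
  (1/2) * (dist x y ^ 2 - dist y z ^ 2 + dist z x ^ 2)

/-- The coarse Ricci curvature of an operator `L`:
`Ric_L(x,y) = Γ₂(L, f_{x,y}, f_{x,y})(x)`. -/
noncomputable def cRic {n : ℕ}
    (L : (EuclideanSpace ℝ (Fin n) → ℝ) → EuclideanSpace ℝ (Fin n) → ℝ)
    (x y : EuclideanSpace ℝ (Fin n)) : ℝ :=
  gamma2 L (testFn x y) x

section Aux

variable {n : ℕ}

local notation "E" => EuclideanSpace ℝ (Fin n)
local notation "e" i => EuclideanSpace.single i (1:ℝ)

/-- An affine function `z ↦ c + ⟪w, z⟫`. -/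
noncomputable def aff (w : E) (c : ℝ) : E → ℝ := fun z => c + ⟪w, z⟫

private lemma euclid_repr (v : E) : v = ∑ i, v i • EuclideanSpace.single i (1:ℝ) := by
  ext j
  rw [WithLp.ofLp_sum, Finset.sum_apply]
  simp [EuclideanSpace.single_apply]

private lemma clm_sum (L : E →L[ℝ] ℝ) (v : E) : L v = ∑ i, v i * L (e i) := by
  conv_lhs => rw [euclid_repr v]
  rw [map_sum]
  simp [smul_eq_mul]

private lemma inner_grad (f : E → ℝ) (x u : E) : ⟪gradient f x, u⟫ = fderiv ℝ f x u := by
  rw [gradient]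
  simp [InnerProductSpace.toDual_apply_apply, ← InnerProductSpace.toDual_apply_apply]

private lemma wLap_eq (ρ f : E → ℝ) (z : E) :
    wLap ρ f z = eLap f z - fderiv ℝ f z (gradient ρ z) := by
  rw [wLap, real_inner_comm, inner_grad]

private lemma norm_sq_eq (v : E) : ‖v‖ ^ 2 = ∑ i, v i * v i := by
  rw [← real_inner_self_eq_norm_sq]
  simp only [PiLp.inner_apply, RCLike.inner_apply, conj_trivial]

private lemma hasFDerivAt_aff (w : E) (c : ℝ) (z : E) :
    HasFDerivAt (aff w c) (innerSL ℝ w) z :=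
  ((innerSL ℝ w).hasFDerivAt).const_add c

private lemma fderiv_aff (w : E) (c : ℝ) (z : E) :
    fderiv ℝ (aff w c) z = innerSL ℝ w :=
  (hasFDerivAt_aff w c z).fderiv

private lemma fderiv_aff_apply (w : E) (c : ℝ) (z u : E) :
    fderiv ℝ (aff w c) z u = ⟪w, u⟫ := by
  rw [fderiv_aff]; rfl

private lemma contDiff_aff (w : E) (c : ℝ) : ContDiff ℝ 2 (aff w c) :=
  contDiff_const.add (innerSL ℝ w).contDiff

private lemma diff_aff (w : E) (c : ℝ) : Differentiable ℝ (aff w c) :=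
  (contDiff_aff w c).differentiable (by norm_num)

private lemma eLap_aff (w : E) (c : ℝ) (z : E) : eLap (aff w c) z = 0 := by
  rw [eLap]
  apply Finset.sum_eq_zero
  intro i _
  have h : (fun y => fderiv ℝ (aff w c) y (e i)) = fun _ => (⟪w, e i⟫ : ℝ) := by
    funext y; rw [fderiv_aff_apply]
  rw [h, fderiv_fun_const]
  rfl

private lemma wLap_aff (ρ : E → ℝ) (w : E) (c : ℝ) (z : E) :
    wLap ρ (aff w c) z = -fderiv ℝ ρ z w := by
  rw [wLap_eq, eLap_aff, fderiv_aff_apply, ← inner_grad ρ, real_inner_comm]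
  ring

private lemma wLap_const (ρ : E → ℝ) (a : ℝ) (z : E) :
    wLap ρ (fun _ => a) z = 0 := by
  rw [wLap_eq]
  have h1 : eLap (fun _ : E => a) z = 0 := by
    rw [eLap]
    apply Finset.sum_eq_zero
    intro i _
    have h : (fun y : E => fderiv ℝ (fun _ : E => a) y (e i)) = fun _ : E => (0:ℝ) := by
      funext y; rw [fderiv_const_apply]; rfl
    rw [h, fderiv_const_apply]; rfl
  rw [h1, fderiv_const_apply]
  simp

/-- The partial derivative function of a `C²` function is differentiable. -/
private lemma diff_partial {u : E → ℝ} (hu : ContDiff ℝ 2 u) (m : E) :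
    Differentiable ℝ (fun y : E => fderiv ℝ u y m) :=
  ((hu.fderiv_right (m := 1) (by norm_num)).clm_apply contDiff_const).differentiable (by norm_num)

private lemma fderiv_mul_apply {u v : E → ℝ} {z : E} (hu : DifferentiableAt ℝ u z)
    (hv : DifferentiableAt ℝ v z) (m : E) :
    fderiv ℝ (fun t => u t * v t) z m = u z * fderiv ℝ v z m + v z * fderiv ℝ u z m := by
  rw [fderiv_fun_mul hu hv]
  simp [smul_eq_mul]

/-- Second pure partial of `u · (affine)`. -/
private lemma fderiv2_mul_aff {u : E → ℝ} (hu : ContDiff ℝ 2 u) (w : E) (c : ℝ) (z : E)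
    (i : Fin n) :
    fderiv ℝ (fun y => fderiv ℝ (fun t => u t * aff w c t) y (e i)) z (e i)
      = fderiv ℝ (fun y => fderiv ℝ u y (e i)) z (e i) * aff w c z
        + 2 * (fderiv ℝ u z (e i) * w i) := by
  have hud : Differentiable ℝ u := hu.differentiable (by norm_num)
  have hkey : (fun y => fderiv ℝ (fun t => u t * aff w c t) y (e i))
      = fun y => (fderiv ℝ u y (e i)) * aff w c y + u y * w i := by
    funext y
    rw [fderiv_mul_apply (hud y) (diff_aff w c y), fderiv_aff_apply,
      EuclideanSpace.inner_single_right]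
    simp [mul_comm]
    ring
  rw [hkey]
  have h1 : DifferentiableAt ℝ (fun y => fderiv ℝ u y (e i) * aff w c y) z :=
    ((diff_partial hu (e i)) z).mul (diff_aff w c z)
  have h2 : DifferentiableAt ℝ (fun y : E => u y * w i) z := (hud z).mul_const _
  rw [fderiv_fun_add h1 h2]
  simp only [ContinuousLinearMap.add_apply]
  rw [fderiv_mul_apply ((diff_partial hu (e i)) z) (diff_aff w c z), fderiv_aff_apply,
    EuclideanSpace.inner_single_right, fderiv_mul_const (hud z)]
  simp [smul_eq_mul]
  ring

private lemma eLap_mul_aff {u : E → ℝ} (hu : ContDiff ℝ 2 u) (w : E) (c : ℝ) (z : E) :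
    eLap (fun t => u t * aff w c t) z
      = eLap u z * aff w c z + 2 * ∑ i, fderiv ℝ u z (e i) * w i := by
  rw [eLap, eLap]
  rw [Finset.sum_congr rfl (fun i _ => fderiv2_mul_aff hu w c z i)]
  rw [Finset.sum_add_distrib, ← Finset.sum_mul, ← Finset.mul_sum]

private lemma wLap_mul_aff (ρ : E → ℝ) {u : E → ℝ} (hu : ContDiff ℝ 2 u) (w : E) (c : ℝ)
    (z : E) :
    wLap ρ (fun t => u t * aff w c t) z
      = aff w c z * wLap ρ u z + 2 * ∑ i, fderiv ℝ u z (e i) * w i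
        + u z * wLap ρ (aff w c) z := by
  have hud : Differentiable ℝ u := hu.differentiable (by norm_num)
  rw [wLap_eq, eLap_mul_aff hu w c z,
    fderiv_mul_apply (hud z) (diff_aff w c z), fderiv_aff_apply,
    wLap_eq ρ u, wLap_aff, ← inner_grad ρ z w, real_inner_comm]
  ring

private lemma carre_aff_self (ρ : E → ℝ) (w : E) (c : ℝ) (z : E) :
    carre (wLap ρ) (aff w c) (aff w c) z = ‖w‖ ^ 2 := by
  rw [carre, wLap_mul_aff ρ (contDiff_aff w c) w c z, norm_sq_eq]
  have : ∀ i, fderiv ℝ (aff w c) z (e i) * w i = w i * w i := by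
    intro i
    rw [fderiv_aff_apply, EuclideanSpace.inner_single_right]
    simp [mul_comm]
  rw [Finset.sum_congr rfl (fun i _ => this i)]
  ring

/-- The function `z ↦ Δ_ρ(aff w c)(z)` equals `z ↦ -(dρ_z)(w)`. -/
private lemma wLap_aff_fun (ρ : E → ℝ) (w : E) (c : ℝ) :
    wLap ρ (aff w c) = fun z => -fderiv ℝ ρ z w := by
  funext z; exact wLap_aff ρ w c z

private lemma contDiff_g {ρ : E → ℝ} (hρ : ContDiff ℝ 3 ρ) (w : E) :
    ContDiff ℝ 2 (fun z : E => -fderiv ℝ ρ z w) :=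
  ((hρ.fderiv_right (by norm_num)).clm_apply contDiff_const).neg

private lemma fderiv_g {ρ : E → ℝ} (hρ : ContDiff ℝ 3 ρ) (w : E) (x : E) (i : Fin n) :
    fderiv ℝ (fun z : E => -fderiv ℝ ρ z w) x (e i)
      = -∑ j, w j * hess ρ x i j := by
  have hd : ∀ j : Fin n, Differentiable ℝ (fun z : E => fderiv ℝ ρ z (e j)) :=
    fun j => diff_partial (hρ.of_le (by norm_num)) _
  have hrepr : (fun z : E => -fderiv ℝ ρ z w)
      = fun z : E => -∑ j, w j * fderiv ℝ ρ z (e j) := by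
    funext z; rw [clm_sum (fderiv ℝ ρ z) w]
  rw [hrepr, fderiv_fun_neg]
  have hsum : fderiv ℝ (fun z : E => ∑ j, w j * fderiv ℝ ρ z (e j)) x
      = ∑ j, fderiv ℝ (fun z : E => w j * fderiv ℝ ρ z (e j)) x := by
    apply fderiv_fun_sum
    intro j _
    exact ((hd j) x).const_mul _
  simp only [ContinuousLinearMap.neg_apply, hsum, ContinuousLinearMap.coe_sum',
    Finset.sum_apply]
  congr 1
  apply Finset.sum_congr rfl
  intro j _
  rw [fderiv_const_mul ((hd j) x)]
  simp [hess, smul_eq_mul]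

private lemma carre_g_aff {ρ : E → ℝ} (hρ : ContDiff ℝ 3 ρ) (w : E) (c : ℝ) (x : E) :
    carre (wLap ρ) (fun z : E => -fderiv ℝ ρ z w) (aff w c) x
      = -∑ i, ∑ j, hess ρ x i j * w i * w j := by
  set g : E → ℝ := fun z : E => -fderiv ℝ ρ z w with hg
  rw [carre, wLap_mul_aff ρ (contDiff_g hρ w) w c x]
  have h1 : wLap ρ (aff w c) x = g x := wLap_aff ρ w c x
  rw [h1]
  have h2 : ∀ i : Fin n, fderiv ℝ g x (e i) * w i = (-∑ j, w j * hess ρ x i j) * w i := by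
    intro i; rw [hg, fderiv_g hρ w x i]
  rw [Finset.sum_congr rfl (fun i _ => h2 i)]
  have h3 : ∀ i : Fin n, (-∑ j, w j * hess ρ x i j) * w i
      = -(∑ j, hess ρ x i j * w i * w j) := by
    intro i
    rw [neg_mul, Finset.sum_mul]
    exact neg_inj.mpr (Finset.sum_congr rfl fun j _ => by ring)
  rw [Finset.sum_congr rfl (fun i _ => h3 i), Finset.sum_neg_distrib]
  ring

private lemma gamma2_aff {ρ : E → ℝ} (hρ : ContDiff ℝ 3 ρ) (w : E) (c : ℝ) (x : E) :
    gamma2 (wLap ρ) (aff w c) x = ∑ i, ∑ j, hess ρ x i j * w i * w j := by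
  rw [gamma2]
  have hc : carre (wLap ρ) (aff w c) (aff w c) = fun _ : E => ‖w‖ ^ 2 := by
    funext z; exact carre_aff_self ρ w c z
  rw [hc, wLap_const, wLap_aff_fun, carre_g_aff hρ w c x]
  ring

private lemma testFn_eq_aff (x y : E) :
    testFn x y = aff (y - x) ((1/2) * (dist x y ^ 2 - ‖y‖ ^ 2 + ‖x‖ ^ 2)) := by
  funext z
  rw [testFn, aff]
  rw [dist_eq_norm y z, dist_eq_norm z x, norm_sub_sq_real, norm_sub_sq_real,
    inner_sub_left]
  rw [real_inner_comm z x]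
  ring

private lemma cRic_eq {ρ : E → ℝ} (hρ : ContDiff ℝ 3 ρ) (x y : E) :
    cRic (wLap ρ) x y = ∑ i, ∑ j, hess ρ x i j * (y - x) i * (y - x) j := by
  rw [cRic, testFn_eq_aff, gamma2_aff hρ]

end Aux

/-- **coarse Ricci lower bound property.** For a C³ weight `ρ` and
`K ∈ ℝ`, the Bakry–Emery bound `Hess ρ_x(v,v) ≥ K‖v‖²` for all `x, v` holds iff
`Ric_{Δ_ρ}(x,y) ≥ K·d²(x,y)` for all `x, y`. -/
theorem coarse_ricci_lower_bound_iff_hessian_lower_bound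
    {n : ℕ} (ρ : EuclideanSpace ℝ (Fin n) → ℝ) (hρ : ContDiff ℝ 3 ρ) (K : ℝ) :
    (∀ x v : EuclideanSpace ℝ (Fin n),
        K * ‖v‖ ^ 2 ≤ ∑ i, ∑ j, hess ρ x i j * v i * v j)
      ↔ (∀ x y : EuclideanSpace ℝ (Fin n),
        K * dist x y ^ 2 ≤ cRic (wLap ρ) x y) := by
  constructor
  · intro h x y
    rw [cRic_eq hρ x y]
    have := h x (y - x)
    rwa [show ‖y - x‖ = dist x y by rw [dist_eq_norm, norm_sub_rev]] at this
  · intro h x v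
    have := h x (x + v)
    rw [cRic_eq hρ x (x + v), add_sub_cancel_left] at this
    rwa [show dist x (x + v) = ‖v‖ by
      rw [dist_eq_norm]; simp] at this
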